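/- There exists a unique valuation D on the algebra of polyhedral cones (the ℝ-span of indicator functions of polyhedral cones in V) such that D([C]) = [C*] for every polyhedral cone C. -/

import Mathlib

open scoped RealInnerProductSpace
open scoped Classical

noncomputable section

variable {V : Type*} [NormedAddCommGroup V] [InnerProductSpace ℝ V] [FiniteDimensional ℝ V]

/-- A polyhedral cone: a finite intersection of closed halfspaces through the origin. -/
def IsPolyCone (C : Set V) : Prop :=
  ∃ s : Finset V, C = ⋂ y ∈ s, {v : V | 0 ≤ ⟪v, y⟫}

/-- `F` is a face of the cone `C`: `F = C ∩ H_y` for some `y` (possibly `0`) with `C ⊆ H_y⁺`. -/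
def IsFaceOf (F C : Set V) : Prop :=
  ∃ y : V, C ⊆ {v : V | 0 ≤ ⟪v, y⟫} ∧ F = C ∩ {v : V | ⟪v, y⟫ = 0}

/-- Dimension of a set: the dimension of its linear span. -/
def sdim (S : Set V) : ℕ := Module.finrank ℝ (Submodule.span ℝ S)

/-- Dual cone. -/
def dualCone (C : Set V) : Set V := {v : V | ∀ c ∈ C, 0 ≤ ⟪v, c⟫}

/-- Angle cone `A(F, C) = { a • (x - z) : a > 0, x ∈ C, z ∈ relint F }`. -/
def angleCone (F C : Set V) : Set V :=
  {w : V | ∃ a : ℝ, 0 < a ∧ ∃ x ∈ C, ∃ z ∈ intrinsicInterior ℝ F, w = a • (x - z)}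

/-- Real-valued indicator function of a set. -/
def ind (S : Set V) : V → ℝ := S.indicator 1

/-- The `Γ` function: `Γ(C, x, y) = Σ_{F face of C} (-1)^(dim F) [A(F,C)](x) [F*](y)`. -/
def Γ (C : Set V) (x y : V) : ℝ :=
  ∑ᶠ F ∈ {F : Set V | IsFaceOf F C},
    (-1 : ℝ) ^ sdim F * ind (angleCone F C) x * ind (dualCone F) y

/-- `F₀` is the minimal face of `C`. -/
def IsMinimalFace (F₀ C : Set V) : Prop :=
  IsFaceOf F₀ C ∧ ∀ F : Set V, IsFaceOf F C → F₀ ⊆ F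

/-- A polyhedron: a finite intersection of translates of halfspaces. -/
def IsPolyhedron (P : Set V) : Prop :=
  ∃ s : Finset (V × ℝ), P = ⋂ p ∈ s, {v : V | p.2 ≤ ⟪v, p.1⟫}

section Aux
namespace Stmt8Aux

variable {V : Type*} [NormedAddCommGroup V] [InnerProductSpace ℝ V] [FiniteDimensional ℝ V]
variable {W : Type*} [NormedAddCommGroup W] [InnerProductSpace ℝ W] [FiniteDimensional ℝ W]

lemma ind_apply (S : Set V) (x : V) : ind S x = if x ∈ S then 1 else 0 := by
  simp [ind, Set.indicator_apply]

lemma exists_between (L U : Finset ℝ) (h : ∀ l ∈ L, ∀ u ∈ U, l ≤ u) :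
    ∃ t : ℝ, (∀ l ∈ L, l ≤ t) ∧ (∀ u ∈ U, t ≤ u) := by
  rcases U.eq_empty_or_nonempty with hU | hU
  · exact ⟨(insert 0 L).max' (by simp), fun l hl => Finset.le_max' _ _ (by simp [hl]),
      by simp [hU]⟩
  · exact ⟨U.min' hU, fun l hl => Finset.le_min' _ _ _ (fun u hu => h l hl u hu),
      fun u hu => Finset.min'_le _ _ hu⟩

lemma isPolyhedron_preimage (f : W →ₗ[ℝ] V) (c : V) {P : Set V} (hP : IsPolyhedron P) :
    IsPolyhedron ((fun w => f w + c) ⁻¹' P) := by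
  obtain ⟨s, rfl⟩ := hP
  refine ⟨s.image (fun p => (LinearMap.adjoint f p.1, p.2 - ⟪c, p.1⟫)), ?_⟩
  ext v
  simp only [Set.mem_preimage, Set.mem_iInter, Set.mem_setOf_eq, Finset.mem_image]
  constructor
  · rintro h p ⟨q, hq, rfl⟩
    have h2 := h q hq
    rw [inner_add_left] at h2
    rw [LinearMap.adjoint_inner_right]
    dsimp only
    linarith
  · intro h q hq
    have h2 := h _ ⟨q, hq, rfl⟩
    rw [LinearMap.adjoint_inner_right] at h2
    dsimp only at h2
    rw [inner_add_left]
    linarith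

lemma isPolyCone_preimage (f : W →ₗ[ℝ] V) {C : Set V} (hC : IsPolyCone C) :
    IsPolyCone (f ⁻¹' C) := by
  obtain ⟨s, rfl⟩ := hC
  refine ⟨s.image (LinearMap.adjoint f), ?_⟩
  ext v
  simp only [Set.mem_preimage, Set.mem_iInter, Set.mem_setOf_eq, Finset.mem_image]
  constructor
  · rintro h p ⟨q, hq, rfl⟩
    rw [LinearMap.adjoint_inner_right]
    exact h q hq
  · intro h q hq
    have h2 := h _ ⟨q, hq, rfl⟩
    rwa [LinearMap.adjoint_inner_right] at h2

lemma polyCone_isPolyhedron {C : Set V} (hC : IsPolyCone C) : IsPolyhedron C := by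
  obtain ⟨s, rfl⟩ := hC
  refine ⟨s.image (fun y => (y, (0:ℝ))), ?_⟩
  ext v
  simp only [Set.mem_iInter, Set.mem_setOf_eq, Finset.mem_image]
  constructor
  · rintro h p ⟨q, hq, rfl⟩
    exact h q hq
  · intro h q hq
    exact h _ ⟨q, hq, rfl⟩

lemma poly_inter {P Q : Set V} (hP : IsPolyhedron P) (hQ : IsPolyhedron Q) :
    IsPolyhedron (P ∩ Q) := by
  obtain ⟨s, rfl⟩ := hP
  obtain ⟨t, rfl⟩ := hQ
  refine ⟨s ∪ t, ?_⟩
  ext v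
  simp only [Set.mem_inter_iff, Set.mem_iInter, Finset.mem_union]
  constructor
  · rintro ⟨h1, h2⟩ p hp
    rcases hp with hp | hp
    · exact h1 p hp
    · exact h2 p hp
  · intro h
    exact ⟨fun p hp => h p (Or.inl hp), fun p hp => h p (Or.inr hp)⟩

lemma poly_isClosed {P : Set V} (hP : IsPolyhedron P) : IsClosed P := by
  obtain ⟨s, rfl⟩ := hP
  refine isClosed_biInter (fun p _ => ?_)
  have : {v : V | p.2 ≤ ⟪v, p.1⟫} = (fun v : V => ⟪p.1, v⟫) ⁻¹' (Set.Ici p.2) := by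
    ext v; simp [real_inner_comm]
  rw [this]
  exact IsClosed.preimage (innerSL ℝ p.1).continuous isClosed_Ici

lemma poly_convex {P : Set V} (hP : IsPolyhedron P) : Convex ℝ P := by
  obtain ⟨s, rfl⟩ := hP
  refine convex_iInter (fun p => convex_iInter (fun _ => ?_))
  have : {v : V | p.2 ≤ ⟪v, p.1⟫} = (fun v : V => ⟪v, p.1⟫) ⁻¹' (Set.Ici p.2) := rfl
  rw [this]
  exact (convex_Ici p.2).linear_preimage (innerₗ V |>.flip p.1)

lemma polyCone_zero_mem {C : Set V} (hC : IsPolyCone C) : (0:V) ∈ C := by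
  obtain ⟨s, rfl⟩ := hC
  simp [Set.mem_iInter]

lemma polyCone_smul_mem {C : Set V} (hC : IsPolyCone C) {c : ℝ} (hc : 0 ≤ c)
    {x : V} (hx : x ∈ C) : c • x ∈ C := by
  obtain ⟨s, rfl⟩ := hC
  simp only [Set.mem_iInter, Set.mem_setOf_eq] at hx ⊢
  intro y hy
  rw [real_inner_smul_left]
  exact mul_nonneg hc (hx y hy)

/-- Fourier–Motzkin elimination: the set of points that can be moved into a polyhedron
along direction `w` is a polyhedron. -/
lemma elim_exists {P : Set V} (hP : IsPolyhedron P) (w : V) :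
    IsPolyhedron {x : V | ∃ s : ℝ, x + s • w ∈ P} := by
  classical
  obtain ⟨s, rfl⟩ := hP
  refine ⟨(s.filter fun p => ⟪w, p.1⟫ = 0) ∪
      (((s ×ˢ s).filter fun pq => 0 < ⟪w, pq.1.1⟫ ∧ ⟪w, pq.2.1⟫ < 0).image
        (fun pq => (⟪w, pq.1.1⟫ • pq.2.1 - ⟪w, pq.2.1⟫ • pq.1.1,
          ⟪w, pq.1.1⟫ * pq.2.2 - ⟪w, pq.2.1⟫ * pq.1.2))), ?_⟩
  ext x
  simp only [Set.mem_setOf_eq, Set.mem_iInter, Set.mem_setOf_eq, Finset.mem_union,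
    Finset.mem_image, Finset.mem_filter, Finset.mem_product]
  constructor
  · rintro ⟨t, ht⟩ p hp
    rcases hp with ⟨hps, hc0⟩ | ⟨⟨q, r⟩, ⟨⟨hqs, hrs⟩, hc1, hc2⟩, rfl⟩
    · have h2 := ht p hps
      rw [inner_add_left, real_inner_smul_left] at h2
      rw [hc0] at h2
      linarith
    · have hq := ht q hqs
      have hr := ht r hrs
      rw [inner_add_left, real_inner_smul_left] at hq hr
      dsimp only
      rw [inner_sub_right, real_inner_smul_right, real_inner_smul_right]
      have A := mul_le_mul_of_nonneg_left hr hc1.le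
      have B := mul_le_mul_of_nonneg_left hq (by linarith : (0:ℝ) ≤ -⟪w, r.1⟫)
      nlinarith [A, B]
  · intro h
    have hbound : ∀ l ∈ ((s.filter fun p => 0 < ⟪w, p.1⟫).image fun p => (p.2 - ⟪x, p.1⟫) / ⟪w, p.1⟫),
        ∀ u ∈ ((s.filter fun p => ⟪w, p.1⟫ < 0).image fun p => (p.2 - ⟪x, p.1⟫) / ⟪w, p.1⟫), l ≤ u := by
      intro l hl u hu
      simp only [Finset.mem_image, Finset.mem_filter] at hl hu
      obtain ⟨q, ⟨hqs, hc1⟩, rfl⟩ := hl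
      obtain ⟨r, ⟨hrs, hc2⟩, rfl⟩ := hu
      have key := h _ (Or.inr ⟨(q, r), ⟨⟨hqs, hrs⟩, hc1, hc2⟩, rfl⟩)
      dsimp only at key
      rw [inner_sub_right, real_inner_smul_right, real_inner_smul_right] at key
      rw [div_le_iff₀ hc1, div_mul_eq_mul_div, le_div_iff_of_neg hc2]
      nlinarith [key]
    obtain ⟨t, hL, hU⟩ := exists_between _ _ hbound
    refine ⟨t, ?_⟩
    intro q hq
    rw [inner_add_left, real_inner_smul_left]
    rcases lt_trichotomy (⟪w, q.1⟫ : ℝ) 0 with hc | hc | hc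
    · have h2 := hU _ (Finset.mem_image_of_mem _ (Finset.mem_filter.2 ⟨hq, hc⟩))
      rw [le_div_iff_of_neg hc] at h2
      linarith
    · have h2 := h _ (Or.inl ⟨hq, hc⟩)
      rw [hc]
      linarith
    · have h2 := hL _ (Finset.mem_image_of_mem _ (Finset.mem_filter.2 ⟨hq, hc⟩))
      rw [div_le_iff₀ hc] at h2
      linarith

/-- Adding a ray to a polyhedral cone gives a polyhedral cone (Fourier–Motzkin for cones). -/
lemma sum_ray_polycone {C : Set V} (hC : IsPolyCone C) (y₀ : V) :
    IsPolyCone {x : V | ∃ s : ℝ, 0 ≤ s ∧ x - s • y₀ ∈ C} := by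
  classical
  obtain ⟨s, rfl⟩ := hC
  refine ⟨(s.filter fun y => ⟪y₀, y⟫ = 0) ∪ (s.filter fun y => 0 < ⟪y₀, y⟫) ∪
      (((s ×ˢ s).filter fun pq => 0 < ⟪y₀, pq.1⟫ ∧ ⟪y₀, pq.2⟫ < 0).image
        (fun pq => ⟪y₀, pq.1⟫ • pq.2 - ⟪y₀, pq.2⟫ • pq.1)), ?_⟩
  ext x
  simp only [Set.mem_setOf_eq, Set.mem_iInter, Finset.mem_union, Finset.mem_image,
    Finset.mem_filter, Finset.mem_product]
  constructor
  · rintro ⟨t, ht0, ht⟩ p hp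
    rcases hp with (⟨hps, hc0⟩ | ⟨hps, hc0⟩) | ⟨⟨q, r⟩, ⟨⟨hqs, hrs⟩, hc1, hc2⟩, rfl⟩
    · have h2 := ht p hps
      rw [inner_sub_left, real_inner_smul_left, hc0] at h2
      linarith
    · have h2 := ht p hps
      rw [inner_sub_left, real_inner_smul_left] at h2
      nlinarith
    · have hq := ht q hqs
      have hr := ht r hrs
      rw [inner_sub_left, real_inner_smul_left] at hq hr
      rw [inner_sub_right, real_inner_smul_right, real_inner_smul_right]
      nlinarith [mul_le_mul_of_nonneg_left hr hc1.le,
        mul_le_mul_of_nonneg_left hq (by linarith : (0:ℝ) ≤ -⟪y₀, r⟫)]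
  · intro h
    have hbound : ∀ l ∈ insert (0:ℝ) ((s.filter fun y => ⟪y₀, y⟫ < 0).image
          fun y => ⟪x, y⟫ / ⟪y₀, y⟫),
        ∀ u ∈ ((s.filter fun y => 0 < ⟪y₀, y⟫).image fun y => ⟪x, y⟫ / ⟪y₀, y⟫), l ≤ u := by
      intro l hl u hu
      simp only [Finset.mem_image, Finset.mem_filter] at hu
      obtain ⟨q, ⟨hqs, hc1⟩, rfl⟩ := hu
      rcases Finset.mem_insert.1 hl with rfl | hl
      · exact div_nonneg (h _ (Or.inl (Or.inr ⟨hqs, hc1⟩))) hc1.le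
      · simp only [Finset.mem_image, Finset.mem_filter] at hl
        obtain ⟨r, ⟨hrs, hc2⟩, rfl⟩ := hl
        have key := h _ (Or.inr ⟨(q, r), ⟨⟨hqs, hrs⟩, hc1, hc2⟩, rfl⟩)
        rw [inner_sub_right, real_inner_smul_right, real_inner_smul_right] at key
        rw [div_le_iff_of_neg hc2, div_mul_eq_mul_div, div_le_iff₀ hc1]
        nlinarith [key]
    obtain ⟨t, hL, hU⟩ := exists_between _ _ hbound
    refine ⟨t, hL 0 (Finset.mem_insert_self 0 _), ?_⟩
    intro q hq
    rw [inner_sub_left, real_inner_smul_left]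
    rcases lt_trichotomy (⟪y₀, q⟫ : ℝ) 0 with hc | hc | hc
    · have h2 := hL _ (Finset.mem_insert_of_mem
        (Finset.mem_image_of_mem _ (Finset.mem_filter.2 ⟨hq, hc⟩)))
      rw [div_le_iff_of_neg hc] at h2
      linarith
    · have h2 := h _ (Or.inl (Or.inl ⟨hq, hc⟩))
      rw [hc]
      linarith
    · have h2 := hU _ (Finset.mem_image_of_mem _ (Finset.mem_filter.2 ⟨hq, hc⟩))
      rw [le_div_iff₀ hc] at h2
      linarith

lemma isPolyCone_zero : IsPolyCone ({0} : Set V) := by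
  classical
  set b := stdOrthonormalBasis ℝ V
  refine ⟨Finset.univ.image (fun i => b i) ∪ Finset.univ.image (fun i => -(b i)), ?_⟩
  ext v
  simp only [Set.mem_singleton_iff, Set.mem_iInter, Finset.mem_union, Finset.mem_image,
    Finset.mem_univ, true_and, Set.mem_setOf_eq]
  constructor
  · rintro rfl p hp
    simp [inner_zero_left]
  · intro h
    have hz : ∀ i, ⟪b i, v⟫ = 0 := by
      intro i
      have h1 := h _ (Or.inl ⟨i, rfl⟩)
      have h2 := h _ (Or.inr ⟨i, rfl⟩)
      rw [inner_neg_right] at h2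
      have : ⟪v, b i⟫ = 0 := le_antisymm (by linarith) h1
      rw [real_inner_comm] at this
      exact this
    have : b.repr v = 0 := by
      ext i
      rw [b.repr_apply_apply]
      simpa using hz i
    have h0 : b.repr v = b.repr 0 := by rw [this, map_zero]
    exact b.repr.injective h0

/-- A finitely generated cone is a polyhedral cone (Weyl). -/
lemma fin_gen_polycone (t : Finset V) :
    IsPolyCone {x : V | ∃ lam : V → ℝ, (∀ y, 0 ≤ lam y) ∧ x = ∑ y ∈ t, lam y • y} := by
  classical
  induction t using Finset.induction_on with
  | empty =>
    have : {x : V | ∃ lam : V → ℝ, (∀ y, 0 ≤ lam y) ∧ x = ∑ y ∈ (∅ : Finset V), lam y • y}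
        = ({0} : Set V) := by
      ext x
      simp only [Finset.sum_empty, Set.mem_setOf_eq, Set.mem_singleton_iff]
      constructor
      · rintro ⟨lam, _, rfl⟩; rfl
      · rintro rfl; exact ⟨fun _ => 0, fun _ => le_refl 0, rfl⟩
    rw [this]
    exact isPolyCone_zero
  | insert a t' ha ih =>
    have heq : {x : V | ∃ lam : V → ℝ, (∀ y, 0 ≤ lam y) ∧ x = ∑ y ∈ insert a t', lam y • y}
        = {x : V | ∃ s : ℝ, 0 ≤ s ∧ x - s • a ∈
            {x : V | ∃ lam : V → ℝ, (∀ y, 0 ≤ lam y) ∧ x = ∑ y ∈ t', lam y • y}} := by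
      ext x
      simp only [Set.mem_setOf_eq]
      constructor
      · rintro ⟨lam, hlam, rfl⟩
        refine ⟨lam a, hlam a, lam, hlam, ?_⟩
        rw [Finset.sum_insert ha]
        abel
      · rintro ⟨c, hc, lam, hlam, hx⟩
        refine ⟨Function.update lam a c, ?_, ?_⟩
        · intro y
          rcases eq_or_ne y a with rfl | hy
          · simpa using hc
          · simpa [Function.update_of_ne hy] using hlam y
        · rw [Finset.sum_insert ha, Function.update_self]
          have : ∀ y ∈ t', Function.update lam a c y • y = lam y • y := by
            intro y hy
            rw [Function.update_of_ne (by rintro rfl; exact ha hy)]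
          rw [Finset.sum_congr rfl this, ← hx]
          abel
    rw [heq]
    exact sum_ray_polycone ih a

/-- Farkas / Weyl: the dual of a polyhedral cone is a polyhedral cone. -/
lemma dualCone_isPolyCone {C : Set V} (hC : IsPolyCone C) : IsPolyCone (dualCone C) := by
  classical
  obtain ⟨s, rfl⟩ := hC
  have hK := fin_gen_polycone (V := V) s
  have heq : dualCone (⋂ y ∈ s, {v : V | 0 ≤ ⟪v, y⟫})
      = {x : V | ∃ lam : V → ℝ, (∀ y, 0 ≤ lam y) ∧ x = ∑ y ∈ s, lam y • y} := by
    apply Set.Subset.antisymm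
    · intro z hz
      by_contra hzK
      obtain ⟨s', hs'⟩ := hK
      rw [hs'] at hzK
      simp only [Set.mem_iInter, Set.mem_setOf_eq, not_forall] at hzK
      obtain ⟨w, hw, hzw⟩ := hzK
      push_neg at hzw
      have hwC : w ∈ ⋂ y ∈ s, {v : V | 0 ≤ ⟪v, y⟫} := by
        simp only [Set.mem_iInter, Set.mem_setOf_eq]
        intro y hy
        have hyK : y ∈ {x : V | ∃ lam : V → ℝ, (∀ y, 0 ≤ lam y) ∧ x = ∑ y ∈ s, lam y • y} := by
          refine ⟨fun v => if v = y then 1 else 0, fun v => by positivity, ?_⟩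
          symm
          have h1 : ∀ v ∈ s, (if v = y then (1:ℝ) else 0) • v = (if v = y then y else 0) := by
            intro v _
            rcases eq_or_ne v y with rfl | hv
            · simp
            · simp [hv]
          rw [Finset.sum_congr rfl h1, Finset.sum_ite_eq' s y (fun _ => y)]
          simp [hy]
        rw [hs'] at hyK
        simp only [Set.mem_iInter, Set.mem_setOf_eq] at hyK
        have := hyK w hw
        rwa [real_inner_comm] at this
      have := hz w hwC
      linarith
    · rintro x ⟨lam, hlam, rfl⟩ c hc
      simp only [Set.mem_iInter, Set.mem_setOf_eq] at hc
      rw [sum_inner]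
      refine Finset.sum_nonneg (fun y hy => ?_)
      rw [real_inner_smul_left]
      refine mul_nonneg (hlam y) ?_
      rw [real_inner_comm]
      exact hc y hy
  rw [heq]
  exact hK

lemma isPolyhedron_preimage_linear (f : W →ₗ[ℝ] V) {P : Set V} (hP : IsPolyhedron P) :
    IsPolyhedron (f ⁻¹' P) := by
  have h := isPolyhedron_preimage f 0 hP
  simpa using h

universe u

lemma image_inner_closed : ∀ (m : ℕ) (V' : Type u) [NormedAddCommGroup V']
    [InnerProductSpace ℝ V'] [FiniteDimensional ℝ V'],
    Module.finrank ℝ V' = m → ∀ (P : Set V'), IsPolyhedron P → ∀ u : V',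
    IsClosed {t : ℝ | ∃ x ∈ P, ⟪x, u⟫ = t} := by
  intro m
  induction m with
  | zero =>
    intro V' _ _ _ hm P hP u
    have hsub : Subsingleton V' := Module.finrank_zero_iff.mp hm
    rcases Set.eq_empty_or_nonempty P with rfl | ⟨x₀, hx₀⟩
    · have he : {t : ℝ | ∃ x ∈ (∅ : Set V'), ⟪x, u⟫ = t} = ∅ := by simp
      rw [he]
      exact isClosed_empty
    · have : {t : ℝ | ∃ x ∈ P, ⟪x, u⟫ = t} = {⟪x₀, u⟫} := by
        ext t
        simp only [Set.mem_setOf_eq, Set.mem_singleton_iff]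
        constructor
        · rintro ⟨x, hx, rfl⟩
          rw [Subsingleton.elim x x₀]
        · rintro rfl
          exact ⟨x₀, hx₀, rfl⟩
      rw [this]
      exact isClosed_singleton
  | succ n ih =>
    intro V' _ _ _ hm P hP u
    rcases eq_or_ne u 0 with rfl | hu
    · rcases Set.eq_empty_or_nonempty P with rfl | ⟨x₀, hx₀⟩
      · have he : {t : ℝ | ∃ x ∈ (∅ : Set V'), ⟪x, (0:V')⟫ = t} = ∅ := by simp
        rw [he]
        exact isClosed_empty
      · have : {t : ℝ | ∃ x ∈ P, ⟪x, (0:V')⟫ = t} = {0} := by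
          ext t
          simp only [Set.mem_setOf_eq, Set.mem_singleton_iff, inner_zero_right]
          constructor
          · rintro ⟨x, hx, rfl⟩; rfl
          · rintro rfl; exact ⟨x₀, hx₀, rfl⟩
        rw [this]
        exact isClosed_singleton
    rcases Nat.eq_zero_or_pos n with rfl | hn
    · -- dimension 1
      have hspan : (ℝ ∙ u : Submodule ℝ V') = ⊤ := by
        apply Submodule.eq_top_of_finrank_eq
        rw [finrank_span_singleton hu, hm]
      have hnorm : (‖u‖:ℝ)^2 ≠ 0 := pow_ne_zero _ (norm_ne_zero_iff.mpr hu)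
      have heq : {t : ℝ | ∃ x ∈ P, ⟪x, u⟫ = t} = (fun t : ℝ => (t / ‖u‖^2) • u) ⁻¹' P := by
        ext t
        simp only [Set.mem_setOf_eq, Set.mem_preimage]
        constructor
        · rintro ⟨x, hx, rfl⟩
          have hx' : x ∈ (ℝ ∙ u : Submodule ℝ V') := by rw [hspan]; trivial
          obtain ⟨c, rfl⟩ := Submodule.mem_span_singleton.mp hx'
          rw [real_inner_smul_left, real_inner_self_eq_norm_sq]
          rw [mul_div_assoc, div_self hnorm, mul_one]
          exact hx
        · intro hmem
          refine ⟨_, hmem, ?_⟩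
          rw [real_inner_smul_left, real_inner_self_eq_norm_sq, div_mul_cancel₀ _ hnorm]
      rw [heq]
      exact (poly_isClosed hP).preimage (by fun_prop)
    · -- dimension ≥ 2 : pick w ⟂ u, w ≠ 0, project it away
      have hW' : Module.finrank ℝ ((ℝ ∙ u)ᗮ : Submodule ℝ V') = n := by
        have h1 := Submodule.finrank_add_finrank_orthogonal (K := (ℝ ∙ u : Submodule ℝ V'))
        rw [finrank_span_singleton hu, hm] at h1
        omega
      have : Nontrivial ((ℝ ∙ u)ᗮ : Submodule ℝ V') := by
        apply Module.nontrivial_of_finrank_pos (R := ℝ)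
        omega
      obtain ⟨w', hw'⟩ := exists_ne (0 : ((ℝ ∙ u)ᗮ : Submodule ℝ V'))
      set w : V' := (w' : V') with hwdef
      have hw0 : w ≠ 0 := fun h => hw' (Subtype.ext h)
      have hwu : ⟪w, u⟫ = 0 := by
        have := w'.2
        rw [Submodule.mem_orthogonal_singleton_iff_inner_left] at this
        exact this
      set W : Submodule ℝ V' := (ℝ ∙ w)ᗮ with hWdef
      have hWrank : Module.finrank ℝ W = n := by
        have h1 := Submodule.finrank_add_finrank_orthogonal (K := (ℝ ∙ w : Submodule ℝ V'))
        rw [finrank_span_singleton hw0, hm] at h1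
        rw [← hWdef] at h1
        omega
      have huW : u ∈ W := Submodule.mem_orthogonal_singleton_iff_inner_right.mpr hwu
      have hnw : (‖w‖:ℝ)^2 ≠ 0 := pow_ne_zero _ (norm_ne_zero_iff.mpr hw0)
      set Q : Set W := (W.subtype) ⁻¹' {x : V' | ∃ s : ℝ, x + s • w ∈ P} with hQdef
      have hQ : IsPolyhedron Q := isPolyhedron_preimage_linear W.subtype (elim_exists hP w)
      have heq : {t : ℝ | ∃ x ∈ P, ⟪x, u⟫ = t}
          = {t : ℝ | ∃ v ∈ Q, ⟪v, (⟨u, huW⟩ : W)⟫ = t} := by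
        ext t
        simp only [Set.mem_setOf_eq]
        constructor
        · rintro ⟨x, hx, rfl⟩
          have hv : x - (⟪x, w⟫ / ‖w‖^2) • w ∈ W := by
            rw [hWdef, Submodule.mem_orthogonal_singleton_iff_inner_right]
            rw [inner_sub_right, real_inner_smul_right, real_inner_self_eq_norm_sq,
              real_inner_comm w x]
            field_simp
            ring
          refine ⟨⟨_, hv⟩, ?_, ?_⟩
          · show (⟨_, hv⟩ : W).1 ∈ {x : V' | ∃ s : ℝ, x + s • w ∈ P}
            refine ⟨⟪x, w⟫ / ‖w‖^2, ?_⟩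
            show x - _ + _ ∈ P
            rw [sub_add_cancel]
            exact hx
          · show ⟪x - (⟪x, w⟫ / ‖w‖^2) • w, u⟫ = ⟪x, u⟫
            rw [inner_sub_left, real_inner_smul_left, hwu, mul_zero, sub_zero]
        · rintro ⟨v, hv, rfl⟩
          obtain ⟨sc, hsc⟩ := hv
          refine ⟨(v : V') + sc • w, hsc, ?_⟩
          rw [inner_add_left, real_inner_smul_left, hwu, mul_zero, add_zero]
          rfl
      rw [heq]
      exact ih W hWrank Q hQ ⟨u, huW⟩

lemma endgame1d {ι : Type*} (s : Finset ι) (J : ι → Set ℝ)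
    (hcl : ∀ i ∈ s, IsClosed (J i)) (hcv : ∀ i ∈ s, Convex ℝ (J i)) (a : ι → ℝ)
    (h : ∀ t : ℝ, ∑ i ∈ s, a i * ind (J i) t = 0) :
    ∑ i ∈ s, a i * (if (J i).Nonempty then 1 else 0) = 0 := by
  classical
  have hwit : ∀ i, ∃ z : ℝ, (J i).Nonempty → z ∈ J i := by
    intro i
    rcases em (J i).Nonempty with hne | hne
    · exact ⟨hne.choose, fun _ => hne.choose_spec⟩
    · exact ⟨0, fun hn => absurd hn hne⟩
  choose wit hwit using hwit
  set CR : Finset ℝ := (s.image (fun i => sInf (J i)) ∪ s.image (fun i => sSup (J i)))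
    ∪ s.image wit with hCR
  set t₀ : ℝ := (insert (0:ℝ) CR).min' (Finset.insert_nonempty _ _) - 1 with ht₀def
  have ht₀ : ∀ r ∈ CR, t₀ < r := by
    intro r hr
    have := Finset.min'_le (insert (0:ℝ) CR) r (Finset.mem_insert_of_mem hr)
    rw [ht₀def]
    linarith
  set T : Finset ℝ := (s.filter fun i => (J i).Nonempty ∧ BddBelow (J i)).image
    (fun i => sInf (J i)) with hT
  have hprev : ∀ b : ℝ, ∃ b' : ℝ, b' < b ∧ ∀ r ∈ CR, r < b → r < b' := by
    intro b
    set F := (insert (b-1) CR).filter (· < b) with hF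
    have hFne : F.Nonempty := ⟨b-1, by simp [hF]⟩
    set c := F.max' hFne with hc
    have hcb : c < b := by
      have hmem := F.max'_mem hFne
      exact (Finset.mem_filter.1 hmem).2
    refine ⟨(c + b)/2, by linarith, ?_⟩
    intro r hr hrb
    have hrc : r ≤ c := Finset.le_max' F r (by simp [hF, hr, hrb])
    linarith
  choose prev hprev1 hprev2 using hprev
  have key : ∀ i ∈ s, (if (J i).Nonempty then (1:ℝ) else 0)
      = ind (J i) t₀ + ∑ b ∈ T, (ind (J i) b - ind (J i) (prev b)) := by
    intro i hi
    rcases em (J i).Nonempty with hne | hne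
    · have hoc := (hcv i hi).ordConnected
      have hwiCR : wit i ∈ CR := Finset.mem_union_right _ (Finset.mem_image_of_mem _ hi)
      rcases em (BddBelow (J i)) with hbb | hbb
      · have hminmem : sInf (J i) ∈ J i := (hcl i hi).csInf_mem hne hbb
        have hmiCR : sInf (J i) ∈ CR :=
          Finset.mem_union_left _ (Finset.mem_union_left _ (Finset.mem_image_of_mem _ hi))
        have hmiT : sInf (J i) ∈ T :=
          Finset.mem_image_of_mem _ (Finset.mem_filter.2 ⟨hi, hne, hbb⟩)
        have hind0 : ind (J i) t₀ = 0 := by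
          rw [ind_apply, if_neg]
          intro hmem
          exact absurd (csInf_le hbb hmem) (not_le.2 (ht₀ _ hmiCR))
        have hjump : ∀ b ∈ T, b ≠ sInf (J i) → ind (J i) b - ind (J i) (prev b) = 0 := by
          intro b _ hbne
          rcases em (b ∈ J i) with hbJ | hbJ
          · have h1 : sInf (J i) < b := lt_of_le_of_ne (csInf_le hbb hbJ) (Ne.symm hbne)
            have h2 : sInf (J i) < prev b := hprev2 b _ hmiCR h1
            have hpb : prev b ∈ J i := hoc.out hminmem hbJ ⟨h2.le, (hprev1 b).le⟩
            rw [ind_apply, ind_apply, if_pos hbJ, if_pos hpb, sub_self]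
          · have hpb : prev b ∉ J i := by
              rcases lt_or_ge b (sInf (J i)) with hlt | hle
              · intro hmem
                exact absurd (csInf_le hbb hmem) (not_le.2 (lt_trans (hprev1 b) hlt))
              · have hba : BddAbove (J i) := by
                  by_contra hba
                  obtain ⟨z, hz, hbz⟩ := not_bddAbove_iff.1 hba b
                  exact hbJ (hoc.out hminmem hz ⟨hle, hbz.le⟩)
                have hsupmem : sSup (J i) ∈ J i := (hcl i hi).csSup_mem hne hba
                have hsb : sSup (J i) < b := by
                  rcases lt_or_ge (sSup (J i)) b with h' | h'
                  · exact h'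
                  · exact absurd (hoc.out hminmem hsupmem ⟨hle, h'⟩) hbJ
                have hsCR : sSup (J i) ∈ CR := Finset.mem_union_left _
                  (Finset.mem_union_right _ (Finset.mem_image_of_mem _ hi))
                have h2 : sSup (J i) < prev b := hprev2 b _ hsCR hsb
                intro hmem
                exact absurd (le_csSup hba hmem) (not_le.2 h2)
            rw [ind_apply, ind_apply, if_neg hbJ, if_neg hpb, sub_self]
        rw [if_pos hne, hind0, zero_add,
          Finset.sum_eq_single_of_mem (sInf (J i)) hmiT hjump]
        have hp : prev (sInf (J i)) ∉ J i := by
          intro hmem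
          exact absurd (csInf_le hbb hmem) (not_le.2 (hprev1 _))
        rw [ind_apply, ind_apply, if_pos hminmem, if_neg hp]
        norm_num
      · have hind1 : ind (J i) t₀ = 1 := by
          obtain ⟨z, hz, hzt⟩ := not_bddBelow_iff.1 hbb t₀
          have : t₀ ∈ J i := hoc.out hz (hwit i hne) ⟨hzt.le, (ht₀ _ hwiCR).le⟩
          rw [ind_apply, if_pos this]
        have hjump : ∀ b ∈ T, ind (J i) b - ind (J i) (prev b) = 0 := by
          intro b _
          rcases em (b ∈ J i) with hbJ | hbJ
          · obtain ⟨z, hz, hzb⟩ := not_bddBelow_iff.1 hbb (prev b)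
            have hpb : prev b ∈ J i := hoc.out hz hbJ ⟨hzb.le, (hprev1 b).le⟩
            rw [ind_apply, ind_apply, if_pos hbJ, if_pos hpb, sub_self]
          · have hba : BddAbove (J i) := by
              by_contra hba
              obtain ⟨z, hz, hbz⟩ := not_bddAbove_iff.1 hba b
              obtain ⟨z', hz', hzb'⟩ := not_bddBelow_iff.1 hbb b
              exact hbJ (hoc.out hz' hz ⟨hzb'.le, hbz.le⟩)
            have hsupmem : sSup (J i) ∈ J i := (hcl i hi).csSup_mem hne hba
            have hsb : sSup (J i) < b := by
              rcases lt_or_ge (sSup (J i)) b with h' | h'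
              · exact h'
              · obtain ⟨z', hz', hzb'⟩ := not_bddBelow_iff.1 hbb b
                exact absurd (hoc.out hz' hsupmem ⟨hzb'.le, h'⟩) hbJ
            have hsCR : sSup (J i) ∈ CR := Finset.mem_union_left _
              (Finset.mem_union_right _ (Finset.mem_image_of_mem _ hi))
            have h2 : sSup (J i) < prev b := hprev2 b _ hsCR hsb
            have hpb : prev b ∉ J i := fun hmem =>
              absurd (le_csSup hba hmem) (not_le.2 h2)
            rw [ind_apply, ind_apply, if_neg hbJ, if_neg hpb, sub_self]
        rw [if_pos hne, hind1, Finset.sum_eq_zero hjump]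
        norm_num
    · have hJe : J i = ∅ := Set.not_nonempty_iff_eq_empty.1 hne
      rw [if_neg hne, hJe]
      simp [ind_apply]
  calc ∑ i ∈ s, a i * (if (J i).Nonempty then (1:ℝ) else 0)
      = ∑ i ∈ s, (a i * ind (J i) t₀
          + ∑ b ∈ T, (a i * ind (J i) b - a i * ind (J i) (prev b))) := by
        refine Finset.sum_congr rfl (fun i hi => ?_)
        rw [key i hi, mul_add, Finset.mul_sum]
        congr 1
        refine Finset.sum_congr rfl (fun b _ => ?_)
        ring
    _ = (∑ i ∈ s, a i * ind (J i) t₀)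
          + ∑ b ∈ T, ((∑ i ∈ s, a i * ind (J i) b) - (∑ i ∈ s, a i * ind (J i) (prev b))) := by
        rw [Finset.sum_add_distrib, Finset.sum_comm]
        congr 1
        refine Finset.sum_congr rfl (fun b _ => ?_)
        rw [Finset.sum_sub_distrib]
    _ = 0 := by
        rw [h t₀, zero_add]
        refine Finset.sum_eq_zero (fun b _ => ?_)
        rw [h b, h (prev b), sub_self]

universe v

lemma euler_rel : ∀ (m : ℕ) (V' : Type u) [NormedAddCommGroup V'] [InnerProductSpace ℝ V']
    [FiniteDimensional ℝ V'], Module.finrank ℝ V' = m →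
    ∀ (ι : Type v) (s : Finset ι) (P : ι → Set V'), (∀ i ∈ s, IsPolyhedron (P i)) →
    ∀ (a : ι → ℝ), (∀ x : V', ∑ i ∈ s, a i * ind (P i) x = 0) →
    ∑ i ∈ s, a i * (if (P i).Nonempty then 1 else 0) = 0 := by
  intro m
  induction m with
  | zero =>
    intro V' _ _ _ hm ι s P hP a hrel
    have hsub : Subsingleton V' := Module.finrank_zero_iff.mp hm
    have hcong : ∑ i ∈ s, a i * (if (P i).Nonempty then (1:ℝ) else 0)
        = ∑ i ∈ s, a i * ind (P i) 0 := by
      refine Finset.sum_congr rfl (fun i hi => ?_)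
      congr 1
      rw [ind_apply]
      by_cases h0 : (0:V') ∈ P i
      · rw [if_pos h0, if_pos ⟨0, h0⟩]
      · rw [if_neg h0, if_neg]
        rintro ⟨x, hx⟩
        exact h0 (by rwa [Subsingleton.elim (0:V') x])
    rw [hcong]
    exact hrel 0
  | succ n ih =>
    intro V' _ _ _ hm ι s P hP a hrel
    have : Nontrivial V' := by
      apply Module.nontrivial_of_finrank_pos (R := ℝ)
      omega
    obtain ⟨u, hu⟩ := exists_ne (0 : V')
    have hnu : (‖u‖:ℝ)^2 ≠ 0 := pow_ne_zero _ (norm_ne_zero_iff.mpr hu)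
    set W : Submodule ℝ V' := (ℝ ∙ u)ᗮ with hWdef
    have hWrank : Module.finrank ℝ W = n := by
      have h1 := Submodule.finrank_add_finrank_orthogonal (K := (ℝ ∙ u : Submodule ℝ V'))
      rw [finrank_span_singleton hu, hm] at h1
      rw [← hWdef] at h1
      omega
    set J : ι → Set ℝ := fun i => {t : ℝ | ∃ x ∈ P i, ⟪x, u⟫ = t} with hJ
    have hJcl : ∀ i ∈ s, IsClosed (J i) := fun i hi =>
      image_inner_closed (n+1) V' hm (P i) (hP i hi) u
    have hJcv : ∀ i ∈ s, Convex ℝ (J i) := by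
      intro i hi t1 h1 t2 h2 α β hα hβ hαβ
      obtain ⟨x1, hx1, rfl⟩ := h1
      obtain ⟨x2, hx2, rfl⟩ := h2
      exact ⟨α • x1 + β • x2, poly_convex (hP i hi) hx1 hx2 hα hβ hαβ, by
        rw [inner_add_left, real_inner_smul_left, real_inner_smul_left]
        simp [smul_eq_mul]⟩
    have hslice : ∀ t : ℝ, ∑ i ∈ s, a i * ind (J i) t = 0 := by
      intro t
      set φ : W → V' := fun v => (v : V') + (t/‖u‖^2) • u with hφ
      have hS : ∀ i ∈ s, IsPolyhedron (φ ⁻¹' (P i)) := fun i hi =>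
        isPolyhedron_preimage W.subtype ((t/‖u‖^2) • u) (hP i hi)
      have hrelS : ∀ v : W, ∑ i ∈ s, a i * ind (φ ⁻¹' (P i)) v = 0 := by
        intro v
        have hcong : ∑ i ∈ s, a i * ind (φ ⁻¹' (P i)) v
            = ∑ i ∈ s, a i * ind (P i) (φ v) := by
          refine Finset.sum_congr rfl (fun i hi => ?_)
          congr 1
        rw [hcong]
        exact hrel (φ v)
      have hIH := ih W hWrank ι s _ hS a hrelS
      have hcong : ∑ i ∈ s, a i * ind (J i) t
          = ∑ i ∈ s, a i * (if (φ ⁻¹' (P i)).Nonempty then (1:ℝ) else 0) := by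
        refine Finset.sum_congr rfl (fun i hi => ?_)
        congr 1
        rw [ind_apply]
        by_cases ht : t ∈ J i
        · rw [if_pos ht, if_pos]
          obtain ⟨x, hx, hxt⟩ := ht
          have hux : ⟪u, x⟫ = t := by rw [real_inner_comm]; exact hxt
          have hv : x - (t/‖u‖^2) • u ∈ W := by
            rw [hWdef, Submodule.mem_orthogonal_singleton_iff_inner_right]
            rw [inner_sub_right, real_inner_smul_right, real_inner_self_eq_norm_sq, hux]
            field_simp
            ring
          refine ⟨⟨_, hv⟩, ?_⟩
          show x - _ + _ ∈ P i
          rw [sub_add_cancel]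
          exact hx
        · rw [if_neg ht, if_neg]
          rintro ⟨v, hv⟩
          refine ht ⟨φ v, hv, ?_⟩
          have hv0 : ⟪(v:V'), u⟫ = 0 :=
            Submodule.mem_orthogonal_singleton_iff_inner_left.mp v.2
          show ⟪(v : V') + (t/‖u‖^2) • u, u⟫ = t
          rw [inner_add_left, real_inner_smul_left, real_inner_self_eq_norm_sq, hv0,
            zero_add, div_mul_cancel₀ _ hnu]
      rw [hcong]
      exact hIH
    have hend := endgame1d s J hJcl hJcv a hslice
    have hcong : ∑ i ∈ s, a i * (if (P i).Nonempty then (1:ℝ) else 0)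
        = ∑ i ∈ s, a i * (if (J i).Nonempty then (1:ℝ) else 0) := by
      refine Finset.sum_congr rfl (fun i hi => ?_)
      congr 1
      by_cases hne : (P i).Nonempty
      · rw [if_pos hne, if_pos]
        obtain ⟨x, hx⟩ := hne
        exact ⟨⟪x, u⟫, x, hx, rfl⟩
      · rw [if_neg hne, if_neg]
        rintro ⟨t, x, hx, _⟩
        exact hne ⟨x, hx⟩
    rw [hcong]
    exact hend

/-- Duality preserves linear relations between indicators of polyhedral cones. -/
lemma dual_rel {ι : Type*} (s : Finset ι) (C : ι → Set V) (hC : ∀ i ∈ s, IsPolyCone (C i))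
    (a : ι → ℝ) (hrel : ∀ x : V, ∑ i ∈ s, a i * ind (C i) x = 0) (y : V) :
    ∑ i ∈ s, a i * ind (dualCone (C i)) y = 0 := by
  classical
  set A : Set V := {x : V | (1:ℝ) ≤ ⟪x, -y⟫} with hA
  have hApoly : IsPolyhedron A := ⟨{(-y, 1)}, by ext x; simp [hA]⟩
  have hQ : ∀ i ∈ s, IsPolyhedron (C i ∩ A) := fun i hi =>
    poly_inter (polyCone_isPolyhedron (hC i hi)) hApoly
  have hrelQ : ∀ x : V, ∑ i ∈ s, a i * ind (C i ∩ A) x = 0 := by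
    intro x
    rcases em (x ∈ A) with hx | hx
    · have hcong : ∑ i ∈ s, a i * ind (C i ∩ A) x = ∑ i ∈ s, a i * ind (C i) x := by
        refine Finset.sum_congr rfl (fun i hi => ?_)
        congr 1
        rw [ind_apply, ind_apply]
        by_cases hxc : x ∈ C i
        · rw [if_pos ⟨hxc, hx⟩, if_pos hxc]
        · rw [if_neg (fun hmem => hxc hmem.1), if_neg hxc]
      rw [hcong]
      exact hrel x
    · refine Finset.sum_eq_zero (fun i hi => ?_)
      rw [ind_apply, if_neg (fun hmem => hx hmem.2), mul_zero]
  have heuler := euler_rel (Module.finrank ℝ V) V rfl ι s _ hQ a hrelQ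
  have hsum0 : ∑ i ∈ s, a i = 0 := by
    have h0 := hrel 0
    have hcong : ∑ i ∈ s, a i * ind (C i) 0 = ∑ i ∈ s, a i := by
      refine Finset.sum_congr rfl (fun i hi => ?_)
      rw [ind_apply, if_pos (polyCone_zero_mem (hC i hi)), mul_one]
    rw [hcong] at h0
    exact h0
  have key : ∀ i ∈ s, ind (dualCone (C i)) y
      = 1 - (if (C i ∩ A).Nonempty then (1:ℝ) else 0) := by
    intro i hi
    rcases em (y ∈ dualCone (C i)) with hy | hy
    · rw [ind_apply, if_pos hy, if_neg, sub_zero]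
      rintro ⟨x, hxC, hxA⟩
      have h1 : (1:ℝ) ≤ ⟪x, -y⟫ := hxA
      rw [inner_neg_right] at h1
      have h2 := hy x hxC
      rw [real_inner_comm] at h2
      linarith
    · rw [ind_apply, if_neg hy, if_pos, sub_self]
      simp only [dualCone, Set.mem_setOf_eq, not_forall] at hy
      obtain ⟨c, hc, hyc⟩ := hy
      push_neg at hyc
      refine ⟨(1/(-⟪y, c⟫)) • c,
        polyCone_smul_mem (hC i hi) (le_of_lt (one_div_pos.mpr (by linarith))) hc, ?_⟩
      show (1:ℝ) ≤ ⟪(1/(-⟪y, c⟫)) • c, -y⟫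
      rw [real_inner_smul_left, inner_neg_right, real_inner_comm c y, one_div]
      have hcy : (0:ℝ) < -⟪c, y⟫ := by rw [real_inner_comm]; linarith
      rw [inv_mul_cancel₀ (ne_of_gt hcy)]
  have hcong : ∑ i ∈ s, a i * ind (dualCone (C i)) y
      = ∑ i ∈ s, (a i - a i * (if (C i ∩ A).Nonempty then (1:ℝ) else 0)) := by
    refine Finset.sum_congr rfl (fun i hi => ?_)
    rw [key i hi]
    ring
  rw [hcong, Finset.sum_sub_distrib, hsum0, heuler, sub_zero]

lemma linComb_apply {ι : Type*} (g : ι → V → ℝ) (c : ι →₀ ℝ) (x : V) :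
    Finsupp.linearCombination ℝ g c x = ∑ i ∈ c.support, c i * g i x := by
  rw [Finsupp.linearCombination_apply, Finsupp.sum, Finset.sum_apply]
  refine Finset.sum_congr rfl (fun i _ => ?_)
  simp [Pi.smul_apply, smul_eq_mul]

end Stmt8Aux
end Aux

theorem stmt8 :
    ∃! D : (Submodule.span ℝ {f : V → ℝ | ∃ C : Set V, IsPolyCone C ∧ f = ind C}) →ₗ[ℝ] (Submodule.span ℝ {f : V → ℝ | ∃ C : Set V, IsPolyCone C ∧ f = ind C}),
      ∀ (C : Set V) (hC : IsPolyCone C),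
        ((D ⟨ind C, Submodule.subset_span ⟨C, hC, rfl⟩⟩ : Submodule.span ℝ {f : V → ℝ | ∃ C : Set V, IsPolyCone C ∧ f = ind C}) : V → ℝ) =
          ind (dualCone C) := by
  classical
  set gen : Set (V → ℝ) := {f : V → ℝ | ∃ C : Set V, IsPolyCone C ∧ f = ind C} with hgen
  set T : ({C : Set V // IsPolyCone C} →₀ ℝ) →ₗ[ℝ] (V → ℝ) :=
    Finsupp.linearCombination ℝ (fun C : {C : Set V // IsPolyCone C} => ind C.1) with hT
  set T' : ({C : Set V // IsPolyCone C} →₀ ℝ) →ₗ[ℝ] (V → ℝ) :=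
    Finsupp.linearCombination ℝ (fun C : {C : Set V // IsPolyCone C} => ind (dualCone C.1))
    with hT'
  have hrangeT : LinearMap.range T = Submodule.span ℝ gen := by
    rw [hT, Finsupp.range_linearCombination]
    congr 1
    ext f
    constructor
    · rintro ⟨⟨C, hC⟩, rfl⟩
      exact ⟨C, hC, rfl⟩
    · rintro ⟨C, hC, rfl⟩
      exact ⟨⟨C, hC⟩, rfl⟩
  have hrangeT' : LinearMap.range T' ≤ Submodule.span ℝ gen := by
    rw [hT', Finsupp.range_linearCombination]
    apply Submodule.span_le.2
    rintro f ⟨⟨C, hC⟩, rfl⟩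
    exact Submodule.subset_span ⟨dualCone C, Stmt8Aux.dualCone_isPolyCone hC, rfl⟩
  have hker : ∀ c : {C : Set V // IsPolyCone C} →₀ ℝ, T c = 0 → T' c = 0 := by
    intro c hc
    have hrel : ∀ x : V, ∑ i ∈ c.support, c i * ind (i.1 : Set V) x = 0 := by
      intro x
      have h1 : T c x = 0 := by rw [hc]; rfl
      rw [hT] at h1
      rwa [Stmt8Aux.linComb_apply] at h1
    funext y
    have h2 := Stmt8Aux.dual_rel c.support (fun i : {C : Set V // IsPolyCone C} => (i.1 : Set V))
      (fun i _ => i.2) c hrel y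
    rw [hT', Stmt8Aux.linComb_apply]
    exact h2
  have hTmem : ∀ c, T c ∈ Submodule.span ℝ gen := by
    intro c
    rw [← hrangeT]
    exact LinearMap.mem_range_self T c
  set Tr : ({C : Set V // IsPolyCone C} →₀ ℝ) →ₗ[ℝ] (Submodule.span ℝ gen) :=
    LinearMap.codRestrict (Submodule.span ℝ gen) T hTmem with hTr
  have hsurj : Function.Surjective Tr := by
    rintro ⟨f, hf⟩
    have hf' : f ∈ LinearMap.range T := by rw [hrangeT]; exact hf
    obtain ⟨c, hc⟩ := hf'
    exact ⟨c, Subtype.ext hc⟩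
  haveI : Module.Projective ℝ ↥(Submodule.span ℝ gen) :=
    Module.Projective.of_basis (Module.Basis.ofVectorSpace ℝ _)
  obtain ⟨σ, hσ⟩ := Tr.exists_rightInverse_of_surjective (LinearMap.range_eq_top.2 hsurj)
  set D : (Submodule.span ℝ gen) →ₗ[ℝ] (Submodule.span ℝ gen) :=
    LinearMap.codRestrict (Submodule.span ℝ gen) (T'.comp σ)
      (fun m => hrangeT' ⟨σ m, rfl⟩) with hD
  have hprop : ∀ (C : Set V) (hC : IsPolyCone C),
      ((D ⟨ind C, Submodule.subset_span ⟨C, hC, rfl⟩⟩ : Submodule.span ℝ gen) : V → ℝ)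
        = ind (dualCone C) := by
    intro C hC
    set e : Submodule.span ℝ gen := ⟨ind C, Submodule.subset_span ⟨C, hC, rfl⟩⟩ with he
    have h2 : Tr (σ e) = e := DFunLike.congr_fun hσ e
    have h1 : T (σ e) = ind C := congrArg Subtype.val h2
    have h3 : T (σ e - Finsupp.single ⟨C, hC⟩ 1) = 0 := by
      rw [map_sub, h1, hT, Finsupp.linearCombination_single, one_smul, sub_self]
    have h4 := hker _ h3
    rw [map_sub] at h4
    have h5 : T' (σ e) = T' (Finsupp.single ⟨C, hC⟩ 1) := sub_eq_zero.mp h4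
    show T' (σ e) = ind (dualCone C)
    rw [h5, hT', Finsupp.linearCombination_single, one_smul]
  refine ⟨D, hprop, ?_⟩
  intro D₂ hD₂
  apply LinearMap.ext
  rintro ⟨f, hf⟩
  induction hf using Submodule.span_induction with
  | mem x h =>
    obtain ⟨C, hC, rfl⟩ := h
    exact Subtype.ext ((hD₂ C hC).trans (hprop C hC).symm)
  | zero =>
    have hz : (⟨0, Submodule.zero_mem _⟩ : Submodule.span ℝ gen) = 0 := rfl
    rw [hz, map_zero, map_zero]
  | add x y hx hy ihx ihy =>
    have ha : (⟨x + y, Submodule.add_mem _ hx hy⟩ : Submodule.span ℝ gen)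
        = ⟨x, hx⟩ + ⟨y, hy⟩ := rfl
    rw [ha, map_add, map_add, ihx, ihy]
  | smul a x hx ih =>
    have hs : (⟨a • x, Submodule.smul_mem _ a hx⟩ : Submodule.span ℝ gen)
        = a • ⟨x, hx⟩ := rfl
    rw [hs, map_smul, map_smul, ih]
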